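/- arXiv:1406.6511 — 3 statements merged into one kernel-verified Lean document; each statement's English description precedes it below -/
import Mathlib

section
/- Let H ≤ GL(V) be the stabilizer of the flag V > U_1 > ... > U_{k-1} > 0 and let 0 < W < V be a subspace. Then U_{k-1} ⊇ W if and only if H contains the subgroup L = {X ∈ GL(V) : (X - I)V ⊆ W}. -/
open Submodule Module

/-- Existence of a functional separating two linearly independent vectors. -/
lemma aux_dual {F V : Type*} [Field F] [AddCommGroup V] [Module F V]
    {u w : V} (huw : u ≠ w) (hs : LinearIndependent F ((↑) : ({u, w} : Set V) → V)) :
    ∃ f : V →ₗ[F] F, f u = 1 ∧ f w = 0 := by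
  replace hs : LinearIndepOn F id ({u, w} : Set V) := hs
  let b := Basis.extend hs
  have hu' : u ∈ hs.extend (Set.subset_univ _) :=
    hs.subset_extend _ (Set.mem_insert _ _)
  have hw' : w ∈ hs.extend (Set.subset_univ _) :=
    hs.subset_extend _ (Set.mem_insert_of_mem _ rfl)
  refine ⟨b.coord ⟨u, hu'⟩, ?_, ?_⟩
  · have h1 : u = b ⟨u, hu'⟩ := (Basis.extend_apply_self hs ⟨u, hu'⟩).symm
    have h2 : b.coord ⟨u, hu'⟩ u = b.coord ⟨u, hu'⟩ (b ⟨u, hu'⟩) := congrArg _ h1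
    rw [h2, Basis.coord_apply, Basis.repr_self, Finsupp.single_eq_same]
  · have h1 : w = b ⟨w, hw'⟩ := (Basis.extend_apply_self hs ⟨w, hw'⟩).symm
    have h2 : b.coord ⟨u, hu'⟩ w = b.coord ⟨u, hu'⟩ (b ⟨w, hw'⟩) := congrArg _ h1
    rw [h2, Basis.coord_apply, Basis.repr_self,
      Finsupp.single_eq_of_ne (by simp [huw, Ne.symm huw])]

/-- Let `H ≤ GL(V)` be the stabilizer of the flag
`V = U_0 > U_1 > ... > U_{k-1} > U_k = 0` and let `0 < W < V`. Then `W ⊆ U_{k-1}` iff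
every `X ∈ GL(V)` with `(X - I)V ⊆ W` stabilizes the flag (i.e. lies in `H`). -/
theorem stmt_8 (F : Type) [Field F] [Fintype F] (n k : ℕ) (hk : 0 < k)
    (U : Fin (k + 1) → Submodule F (Fin n → F))
    (hanti : StrictAnti U) (h0 : U 0 = ⊤) (hlast : U (Fin.last k) = ⊥)
    (W : Submodule F (Fin n → F)) (hW0 : W ≠ ⊥) (hWV : W ≠ ⊤) :
    W ≤ U ⟨k - 1, by omega⟩ ↔
      ∀ X : GL (Fin n) F,
        (∀ v : Fin n → F, (X : Matrix (Fin n) (Fin n) F).mulVec v - v ∈ W) →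
        ∀ i, (U i).map (Matrix.mulVecLin (X : Matrix (Fin n) (Fin n) F)) = U i := by
  constructor
  · intro hWU X hX i
    -- the linear equivalence associated with X
    set e : (Fin n → F) ≃ₗ[F] (Fin n → F) :=
      (Matrix.GeneralLinearGroup.toLin X).toLinearEquiv with he
    have he_apply : ∀ v, e v = (X : Matrix (Fin n) (Fin n) F).mulVec v := fun v => rfl
    have hesymm : ∀ v : Fin n → F, e.symm v - v ∈ W := by
      intro v
      have h1 : e (e.symm v) - e.symm v ∈ W := by
        rw [he_apply]; exact hX _
      have h2 : e (e.symm v) = v := e.apply_symm_apply v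
      rw [h2] at h1
      simpa using W.neg_mem h1
    -- X maps each U j into itself
    have key : ∀ (j : Fin (k + 1)), Submodule.map (e : (Fin n → F) →ₗ[F] (Fin n → F)) (U j) ≤ U j := by
      intro j
      rintro _ ⟨v, hv, rfl⟩
      by_cases hj : j = Fin.last k
      · subst hj; rw [hlast] at hv ⊢
        obtain rfl : v = 0 := by simpa using hv
        simp
      · -- j ≤ k - 1, so U ⟨k-1⟩ ≤ U j
        have hjle : (j : ℕ) ≤ k - 1 := by
          have : (j : ℕ) < k := by
            rcases lt_or_eq_of_le (Nat.lt_succ_iff.mp j.isLt) with h | h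
            · exact h
            · exact absurd (Fin.ext h) hj
          omega
        have hUle : U ⟨k - 1, by omega⟩ ≤ U j := hanti.antitone (by
          simp [Fin.le_def, hjle])
        have hw : e v - v ∈ U j := hUle (hWU (by rw [he_apply]; exact hX v))
        have : (e v : Fin n → F) = v + (e v - v) := by abel
        rw [show ((e : (Fin n → F) →ₗ[F] (Fin n → F)) v) = e v from rfl, this]
        exact (U j).add_mem hv hw
    -- the same for the inverse, hence equality
    have keysymm : Submodule.map (e.symm : (Fin n → F) →ₗ[F] (Fin n → F)) (U i) ≤ U i := by
      rintro _ ⟨v, hv, rfl⟩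
      by_cases hj : i = Fin.last k
      · subst hj; rw [hlast] at hv ⊢
        obtain rfl : v = 0 := by simpa using hv
        simp
      · have hjle : (i : ℕ) ≤ k - 1 := by
          have : (i : ℕ) < k := by
            rcases lt_or_eq_of_le (Nat.lt_succ_iff.mp i.isLt) with h | h
            · exact h
            · exact absurd (Fin.ext h) hj
          omega
        have hUle : U ⟨k - 1, by omega⟩ ≤ U i := hanti.antitone (by
          simp [Fin.le_def, hjle])
        have hw : e.symm v - v ∈ U i := hUle (hWU (hesymm v))
        have : (e.symm v : Fin n → F) = v + (e.symm v - v) := by abel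
        rw [show ((e.symm : (Fin n → F) →ₗ[F] (Fin n → F)) v) = e.symm v from rfl, this]
        exact (U i).add_mem hv hw
    have hmap : Submodule.map (e : (Fin n → F) →ₗ[F] (Fin n → F)) (U i) = U i := by
      refine le_antisymm (key i) ?_
      intro v hv
      have : e.symm v ∈ U i := keysymm ⟨v, hv, rfl⟩
      exact ⟨e.symm v, this, e.apply_symm_apply v⟩
    have : Matrix.mulVecLin (X : Matrix (Fin n) (Fin n) F) =
        (e : (Fin n → F) →ₗ[F] (Fin n → F)) := rfl
    rw [this, hmap]
  · intro hH
    intro w hw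
    by_contra hwU
    -- pick a nonzero u in U_{k-1}
    have hUbot : U ⟨k - 1, by omega⟩ ≠ ⊥ := by
      intro h
      have hlt : (⟨k - 1, by omega⟩ : Fin (k + 1)) < Fin.last k := by
        simp [Fin.lt_def]; omega
      have := hanti hlt
      rw [h, hlast] at this
      exact lt_irrefl _ this
    obtain ⟨u, hu, hune⟩ := Submodule.exists_mem_ne_zero_of_ne_bot hUbot
    have hpair : ∀ a : F, a • u ≠ w := by
      intro a h
      exact hwU (h ▸ Submodule.smul_mem _ a hu)
    have huw : u ≠ w := by
      intro h; exact hpair 1 (by simpa using h)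
    obtain ⟨f, hfu, hfw⟩ := aux_dual huw (linearIndepOn_id_pair hune hpair)
    -- the transvection v ↦ v + f v • w
    set g : (Fin n → F) →ₗ[F] (Fin n → F) :=
      LinearMap.id + LinearMap.smulRight f w with hg
    set g' : (Fin n → F) →ₗ[F] (Fin n → F) :=
      LinearMap.id - LinearMap.smulRight f w with hg'
    have hgapp : ∀ v, g v = v + f v • w := fun v => rfl
    have hg'app : ∀ v, g' v = v - f v • w := fun v => rfl
    have hcomp1 : g'.comp g = LinearMap.id := by
      ext v
      simp only [LinearMap.comp_apply, LinearMap.id_apply, hgapp, hg'app,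
        map_add, map_smul, hfw, smul_eq_mul, mul_zero, add_zero]
      abel_nf
      simp [smul_smul, hfw]
    have hcomp2 : g.comp g' = LinearMap.id := by
      ext v
      simp only [LinearMap.comp_apply, LinearMap.id_apply, hgapp, hg'app,
        map_sub, map_smul, hfw, smul_eq_mul, mul_zero, sub_zero]
      abel_nf
      simp [smul_smul, hfw]
    set e : (Fin n → F) ≃ₗ[F] (Fin n → F) := LinearEquiv.ofLinear g g' hcomp2 hcomp1 with he
    set X : GL (Fin n) F :=
      Matrix.GeneralLinearGroup.toLin.symm (LinearMap.GeneralLinearGroup.ofLinearEquiv e) with hXdef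
    have hXcoe : Matrix.mulVecLin (X : Matrix (Fin n) (Fin n) F) = g := by
      have h1 : Matrix.mulVecLin (X : Matrix (Fin n) (Fin n) F) =
          ((Matrix.GeneralLinearGroup.toLin X).toLinearEquiv :
            (Fin n → F) →ₗ[F] (Fin n → F)) := rfl
      rw [h1, hXdef]
      simp only [MulEquiv.apply_symm_apply]
      rfl
    have hXW : ∀ v : Fin n → F, (X : Matrix (Fin n) (Fin n) F).mulVec v - v ∈ W := by
      intro v
      have : (X : Matrix (Fin n) (Fin n) F).mulVec v = g v := by
        rw [← hXcoe]; rfl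
      rw [this, hgapp]
      simpa using W.smul_mem (f v) hw
    have hstab := hH X hXW ⟨k - 1, by omega⟩
    rw [hXcoe] at hstab
    -- g u = u + w must be in U_{k-1}, forcing w ∈ U_{k-1}
    have hgu : g u ∈ U ⟨k - 1, by omega⟩ := by
      rw [← hstab]; exact ⟨u, hu, rfl⟩
    rw [hgapp, hfu, one_smul] at hgu
    have : w ∈ U ⟨k - 1, by omega⟩ := by
      have := (U ⟨k - 1, by omega⟩).sub_mem hgu hu
      simpa using this
    exact hwU this
end

section
/- Let H ≤ GL(V) be the stabilizer of the flag V > U_1 > ... > U_{k-1} > 0 and let 0 < W < V. Then U_1 ⊆ W if and only if H contains the subgroup {X ∈ GL(V) : (X - I)W = 0}. -/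
/-- Let `H ≤ GL(V)` be the stabilizer of the flag
`V = U_0 > U_1 > ... > U_{k-1} > U_k = 0` and let `0 < W < V`. Then `U_1 ⊆ W` iff
every `X ∈ GL(V)` fixing `W` pointwise stabilizes the flag (lies in `H`). -/
theorem stmt_10 (F : Type) [Field F] [Fintype F] (n k : ℕ) (hk : 0 < k)
    (U : Fin (k + 1) → Submodule F (Fin n → F))
    (hanti : StrictAnti U) (h0 : U 0 = ⊤) (hlast : U (Fin.last k) = ⊥)
    (W : Submodule F (Fin n → F)) (hW0 : W ≠ ⊥) (hWV : W ≠ ⊤) :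
    U ⟨1, by omega⟩ ≤ W ↔
      ∀ X : GL (Fin n) F,
        (∀ w ∈ W, (X : Matrix (Fin n) (Fin n) F).mulVec w = w) →
        ∀ i, (U i).map (Matrix.mulVecLin (X : Matrix (Fin n) (Fin n) F)) = U i := by
  constructor
  · intro hle X hX i
    rcases Nat.eq_zero_or_pos i.val with hi | hi
    · have : i = 0 := Fin.ext hi
      subst this
      rw [h0, Submodule.map_top, LinearMap.range_eq_top]
      intro y
      refine ⟨(X⁻¹ : GL (Fin n) F).1.mulVec y, ?_⟩
      have hXX : (X : Matrix (Fin n) (Fin n) F) * ((X⁻¹ : GL (Fin n) F) : Matrix (Fin n) (Fin n) F) = 1 := by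
        rw [← Matrix.GeneralLinearGroup.coe_mul, mul_inv_cancel, Matrix.GeneralLinearGroup.coe_one]
      rw [Matrix.mulVecLin_apply, Matrix.mulVec_mulVec, hXX, Matrix.one_mulVec]
    · have hUi : U i ≤ W :=
        le_trans (hanti.antitone (show (⟨1, by omega⟩ : Fin (k+1)) ≤ i from hi)) hle
      apply le_antisymm
      · rintro x ⟨y, hy, rfl⟩
        simpa [Matrix.mulVecLin_apply, hX y (hUi hy)] using hy
      · intro x hx
        exact ⟨x, hx, by simp [Matrix.mulVecLin_apply, hX x (hUi hx)]⟩
  · intro h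
    classical
    by_contra hnot
    obtain ⟨u, hu1, huW⟩ := SetLike.not_le_iff_exists.mp hnot
    obtain ⟨f0, hf0u, hf0W⟩ := W.exists_dual_map_eq_bot_of_notMem huW inferInstance
    set f : (Fin n → F) →ₗ[F] F := (f0 u)⁻¹ • f0 with hf
    have hfu : f u = 1 := by simp [hf, inv_mul_cancel₀ hf0u]
    have hfW : ∀ w ∈ W, f w = 0 := by
      intro w hw
      have h1 : f0 w ∈ W.map f0 := ⟨w, hw, rfl⟩
      rw [hf0W, Submodule.mem_bot] at h1
      simp [hf, h1]
    have h1lt : U ⟨1, by omega⟩ < U 0 := hanti (by simp [Fin.lt_def])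
    obtain ⟨v0, hv0⟩ : ∃ v0, v0 ∉ U ⟨1, by omega⟩ := by
      by_contra hall
      push_neg at hall
      exact absurd (le_antisymm h1lt.le (fun x _ => hall x)) h1lt.ne
    set v : Fin n → F := if f v0 = -1 then v0 + u else v0 with hv
    have hvU : v ∉ U ⟨1, by omega⟩ := by
      rw [hv]; split
      · intro hmem
        exact hv0 (by simpa using (U _).sub_mem hmem hu1)
      · exact hv0
    have hc : 1 + f v ≠ 0 := by
      rw [hv]; split
      · rename_i hy
        simp [hfu, hy]
      · rename_i hne
        intro hcon
        exact hne (by linear_combination hcon)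
    set e : (Fin n → F) ≃ₗ[F] (Fin n → F) :=
      LinearEquiv.ofLinear (LinearMap.id + f.smulRight v)
        (LinearMap.id - (1 + f v)⁻¹ • f.smulRight v)
        (by
          refine LinearMap.ext fun x => ?_
          simp only [LinearMap.comp_apply, LinearMap.add_apply, LinearMap.sub_apply,
            LinearMap.id_apply, LinearMap.smul_apply, LinearMap.smulRight_apply,
            map_sub, map_smul, smul_eq_mul]
          match_scalars <;> field_simp <;> ring)
        (by
          refine LinearMap.ext fun x => ?_
          simp only [LinearMap.comp_apply, LinearMap.add_apply, LinearMap.sub_apply,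
            LinearMap.id_apply, LinearMap.smul_apply, LinearMap.smulRight_apply,
            map_add, map_smul, smul_eq_mul]
          match_scalars <;> field_simp <;> ring) with he
    have heapp : ∀ x, e x = x + f x • v := fun x => rfl
    set X : GL (Fin n) F :=
      Matrix.GeneralLinearGroup.toLin.symm (LinearMap.GeneralLinearGroup.ofLinearEquiv e) with hX
    have hXlin : Matrix.mulVecLin (X : Matrix (Fin n) (Fin n) F)
        = ((e : (Fin n → F) →ₗ[F] (Fin n → F))) := by
      rw [← Matrix.GeneralLinearGroup.coe_toLin X, hX]
      simp only [MulEquiv.apply_symm_apply]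
      rfl
    have hmul : ∀ x, (X : Matrix (Fin n) (Fin n) F).mulVec x = e x := by
      intro x
      rw [← Matrix.mulVecLin_apply, hXlin]
      rfl
    have hfix : ∀ w ∈ W, (X : Matrix (Fin n) (Fin n) F).mulVec w = w := by
      intro w hw
      rw [hmul, heapp, hfW w hw]
      simp
    have hmap := h X hfix ⟨1, by omega⟩
    rw [hXlin] at hmap
    have hmem : e u ∈ U ⟨1, by omega⟩ := by
      rw [← hmap]
      exact ⟨u, hu1, rfl⟩
    rw [heapp, hfu, one_smul] at hmem
    exact hvU (by simpa using (U _).sub_mem hmem hu1)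
end

section
/- Let V = F_q^n, let H be the stabilizer of the flag V > U_1 > ... > U_{k-1} > 0 with T = U_{k-1}, and let U' be a hyperplane of V not containing T. Let N = {X ∈ GL(V) : (X-I)V ⊆ U' and Xu = u for all u ∈ U'}. Then the sum of the subspaces (X - I)V over all X ∈ H ∩ N equals U' ∩ T. -/
open Matrix in

/-- Let `H` be the stabilizer of the flag `V = U_0 > ... > U_k = 0`,
`T = U_{k-1}`, and let `U'` be a hyperplane not containing `T`. With
`N = {X ∈ GL(V) : (X-I)V ⊆ U' and X fixes U' pointwise}`, the sum of the images
`(X - I)V` over all `X ∈ H ∩ N` equals `U' ∩ T`. -/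
theorem stmt_13 (F : Type) [Field F] [Fintype F] (n k : ℕ) (hk : 0 < k)
    (U : Fin (k + 1) → Submodule F (Fin n → F))
    (hanti : StrictAnti U) (h0 : U 0 = ⊤) (hlast : U (Fin.last k) = ⊥)
    (U' : Submodule F (Fin n → F)) (hU' : Module.finrank F U' = n - 1)
    (hUT : ¬ U ⟨k - 1, by omega⟩ ≤ U') :
    (⨆ X ∈ {X : GL (Fin n) F |
        (∀ i, (U i).map (Matrix.mulVecLin (X : Matrix (Fin n) (Fin n) F)) = U i) ∧
        (∀ v : Fin n → F, (X : Matrix (Fin n) (Fin n) F).mulVec v - v ∈ U') ∧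
        (∀ u ∈ U', (X : Matrix (Fin n) (Fin n) F).mulVec u = u)},
        LinearMap.range
          (Matrix.mulVecLin (X : Matrix (Fin n) (Fin n) F) - LinearMap.id)) =
      U' ⊓ U ⟨k - 1, by omega⟩ := by
  classical
  set T : Submodule F (Fin n → F) := U ⟨k - 1, by omega⟩ with hTdef
  have hVfr : Module.finrank F (Fin n → F) = n := Module.finrank_fin_fun F
  -- codisjointness lemma
  have hsup : ∀ W : Submodule F (Fin n → F), ¬ W ≤ U' → U' ⊔ W = ⊤ := by
    intro W hW
    have hlt : U' < U' ⊔ W :=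
      lt_of_le_of_ne le_sup_left (fun h => hW (le_sup_right.trans h.ge))
    have h1 : n - 1 < Module.finrank F ↥(U' ⊔ W) := by
      rw [← hU']; exact Submodule.finrank_lt_finrank_of_lt hlt
    have h2 : Module.finrank F ↥(U' ⊔ W) ≤ n :=
      (Submodule.finrank_le _).trans_eq hVfr
    exact Submodule.eq_top_of_finrank_eq (by rw [hVfr]; omega)
  obtain ⟨t, htT, htU'⟩ := SetLike.not_le_iff_exists.mp hUT
  have ht0 : t ≠ 0 := fun h => htU' (h ▸ U'.zero_mem)
  -- build the functional φ with kernel U' and φ t = 1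
  have hdisj : Disjoint U' (Submodule.span F {t}) := by
    rw [Submodule.disjoint_span_singleton]
    intro h; exact absurd h htU'
  have hcompl : IsCompl (Submodule.span F {t}) U' := by
    constructor
    · exact hdisj.symm
    · rw [codisjoint_iff, sup_comm]
      exact hsup _ (fun h => htU' (h (Submodule.mem_span_singleton_self t)))
  set π := Submodule.linearProjOfIsCompl (Submodule.span F {t}) U' hcompl
  set φ : (Fin n → F) →ₗ[F] F :=
    ((LinearEquiv.toSpanNonzeroSingleton F (Fin n → F) t ht0).symm : (Submodule.span F {t}) →ₗ[F] F) ∘ₗ π with hφdef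
  have hφU' : ∀ u ∈ U', φ u = 0 := by
    intro u hu
    simp only [hφdef, LinearMap.comp_apply]
    rw [show π u = 0 from Submodule.linearProjOfIsCompl_apply_right' hcompl hu, map_zero]
  have hφt : φ t = 1 := by
    have : π t = ⟨t, Submodule.mem_span_singleton_self t⟩ :=
      Submodule.linearProjOfIsCompl_apply_left hcompl ⟨t, Submodule.mem_span_singleton_self t⟩
    simp only [hφdef, LinearMap.comp_apply, this]
    exact LinearEquiv.coord_self F (Fin n → F) t ht0
  apply le_antisymm
  · -- each range is contained in U' ⊓ T
    refine iSup₂_le fun X hX => ?_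
    rintro x ⟨v, rfl⟩
    obtain ⟨hX1, hX2, hX3⟩ := hX
    simp only [LinearMap.sub_apply, LinearMap.id_apply, Matrix.mulVecLin_apply]
    refine Submodule.mem_inf.mpr ⟨hX2 v, ?_⟩
    -- decompose v = u + s with u ∈ U', s ∈ T
    have hvtop : v ∈ U' ⊔ T := by rw [hsup T hUT]; trivial
    obtain ⟨u, hu, s, hs, rfl⟩ := Submodule.mem_sup.mp hvtop
    have hXs : (X : Matrix (Fin n) (Fin n) F) *ᵥ s ∈ T := by
      rw [hTdef, ← hX1 ⟨k - 1, by omega⟩]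
      exact ⟨s, hs, rfl⟩
    have : (X : Matrix (Fin n) (Fin n) F) *ᵥ (u + s) = u + (X : Matrix (Fin n) (Fin n) F) *ᵥ s := by
      rw [Matrix.mulVec_add, hX3 u hu]
    rw [this]
    have : u + (X : Matrix (Fin n) (Fin n) F) *ᵥ s - (u + s)
        = (X : Matrix (Fin n) (Fin n) F) *ᵥ s - s := by abel
    rw [this]
    exact T.sub_mem hXs hs
  · -- every w ∈ U' ⊓ T is in some range
    intro w hw
    obtain ⟨hwU', hwT⟩ := Submodule.mem_inf.mp hw
    -- the rank-one perturbation
    set L : (Fin n → F) →ₗ[F] (Fin n → F) := (LinearMap.toSpanSingleton F _ w) ∘ₗ φ with hLdef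
    have hLapp : ∀ v, L v = φ v • w := fun v => rfl
    have hLL : ∀ v, L (L v) = 0 := by
      intro v
      rw [hLapp, hLapp, LinearMap.map_smul, hφU' w hwU', smul_zero, zero_smul]
    set f : (Fin n → F) →ₗ[F] (Fin n → F) := LinearMap.id + L with hfdef
    set g : (Fin n → F) →ₗ[F] (Fin n → F) := LinearMap.id - L with hgdef
    have hfg : f ∘ₗ g = LinearMap.id := by
      apply LinearMap.ext; intro v
      simp only [hfdef, hgdef, LinearMap.comp_apply, LinearMap.add_apply, LinearMap.sub_apply,
        LinearMap.id_apply, LinearMap.map_sub, hLL]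
      abel
    have hgf : g ∘ₗ f = LinearMap.id := by
      apply LinearMap.ext; intro v
      simp only [hfdef, hgdef, LinearMap.comp_apply, LinearMap.add_apply, LinearMap.sub_apply,
        LinearMap.id_apply, LinearMap.map_add, hLL]
      abel
    set X : GL (Fin n) F :=
      ⟨LinearMap.toMatrix' f, LinearMap.toMatrix' g,
        by rw [← LinearMap.toMatrix'_comp, hfg, LinearMap.toMatrix'_id],
        by rw [← LinearMap.toMatrix'_comp, hgf, LinearMap.toMatrix'_id]⟩ with hXdef
    have hXcoe : (X : Matrix (Fin n) (Fin n) F).mulVecLin = f := Matrix.toLin'_toMatrix' f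
    have hXmul : ∀ v, (X : Matrix (Fin n) (Fin n) F) *ᵥ v = f v := by
      intro v; rw [← Matrix.mulVecLin_apply, hXcoe]
    have hfv : ∀ v, f v = v + φ v • w := fun v => rfl
    have hgv : ∀ v, g v = v - φ v • w := fun v => rfl
    have hXmem : X ∈ {X : GL (Fin n) F |
        (∀ i, (U i).map (Matrix.mulVecLin (X : Matrix (Fin n) (Fin n) F)) = U i) ∧
        (∀ v : Fin n → F, (X : Matrix (Fin n) (Fin n) F).mulVec v - v ∈ U') ∧
        (∀ u ∈ U', (X : Matrix (Fin n) (Fin n) F).mulVec u = u)} := by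
      refine ⟨?_, ?_, ?_⟩
      · intro i
        rw [hXcoe]
        by_cases hi : (i : ℕ) = k
        · have : i = Fin.last k := Fin.ext hi
          rw [this, hlast, Submodule.map_bot]
        · have hik : (i : ℕ) ≤ k - 1 := by have := i.isLt; omega
          have hTle : T ≤ U i := by
            rcases eq_or_lt_of_le (show i ≤ (⟨k - 1, by omega⟩ : Fin (k + 1)) from hik) with h | h
            · rw [h]
            · exact le_of_lt (hanti h)
          have hwUi : w ∈ U i := hTle hwT
          apply le_antisymm
          · rintro x ⟨y, hy, rfl⟩
            rw [hfv]
            exact (U i).add_mem hy ((U i).smul_mem _ hwUi)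
          · intro x hx
            refine ⟨g x, ?_, ?_⟩
            · rw [hgv]
              exact (U i).sub_mem hx ((U i).smul_mem _ hwUi)
            · have := congrArg (fun h => h x) (congrArg DFunLike.coe hfg)
              simpa using this
      · intro v
        rw [hXmul, hfv]
        have : v + φ v • w - v = φ v • w := by abel
        rw [this]
        exact U'.smul_mem _ hwU'
      · intro u hu
        rw [hXmul, hfv, hφU' u hu, zero_smul, add_zero]
    refine Submodule.mem_iSup_of_mem X (Submodule.mem_iSup_of_mem hXmem ?_)
    refine ⟨t, ?_⟩
    rw [LinearMap.sub_apply, LinearMap.id_apply, hXcoe, hfv, hφt, one_smul]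
    abel
end
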